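/- Let A = [[2, 0], [0, 1]] and C = [[2, 1], [1, 1]] as operators on ℂ². There exists a bounded operator U ∈ B(ℂ²) satisfying |⟨Ux, y⟩| ≤ ‖x‖‖y‖ + ‖Ax‖‖y‖ + ‖Cx‖‖y‖ for all x, y ∈ ℂ², such that U admits no decomposition U = U₁ + U₂ + U₃ with operators U₁, U₂, U₃ ∈ B(ℂ²) satisfying |⟨U₁x, y⟩| ≤ ‖x‖‖y‖, |⟨U₂x, y⟩| ≤ ‖Ax‖‖y‖, and |⟨U₃x, y⟩| ≤ ‖Cx‖‖y‖ for all x, y ∈ ℂ². In particular, a bilinear form majorized by a sum of the moduli of three bounded forms need not decompose as a sum of three forms each majorized by the corresponding term. -/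

import Mathlib

set_option maxHeartbeats 1600000

/-- The operator on `ℂ²` given by the matrix `[[2, 0], [0, 1]]`. -/
noncomputable def opA : EuclideanSpace ℂ (Fin 2) →L[ℂ] EuclideanSpace ℂ (Fin 2) :=
  Matrix.toEuclideanCLM (𝕜 := ℂ) !![2, 0; 0, 1]

/-- The operator on `ℂ²` given by the matrix `[[2, 1], [1, 1]]`. -/
noncomputable def opC : EuclideanSpace ℂ (Fin 2) →L[ℂ] EuclideanSpace ℂ (Fin 2) :=
  Matrix.toEuclideanCLM (𝕜 := ℂ) !![2, 1; 1, 1]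

open scoped ComplexConjugate

namespace CounterexampleThreeTerms

noncomputable section

local notation "E" => EuclideanSpace ℂ (Fin 2)

/-- The counterexample operator `U = [[3+√5, 3√5/5], [0, 49/20]]`. -/
noncomputable def opU : E →L[ℂ] E :=
  Matrix.toEuclideanCLM (𝕜 := ℂ)
    !![((3 + Real.sqrt 5 : ℝ) : ℂ), ((3 * Real.sqrt 5 / 5 : ℝ) : ℂ); 0, ((49/20 : ℝ) : ℂ)]

lemma le_of_sq_le_sq'' (t a : ℝ) (ha : 0 ≤ a) (h : t^2 ≤ a^2) : t ≤ a := by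
  nlinarith

/-- The central real inequality. -/
lemma key_real (p q s : ℝ) (hp : 0 ≤ p) (hq : 0 ≤ q) (hs1 : s ≤ p*q) (hs2 : -(p*q) ≤ s)
    (N0 N1 N2 N3 : ℝ) (h1 : 0 ≤ N1) (h2 : 0 ≤ N2) (h3 : 0 ≤ N3)
    (e0 : N0^2 = (14+6*Real.sqrt 5)*p^2 + (3121/400)*q^2 + (6+18*Real.sqrt 5/5)*s)
    (e1 : N1^2 = p^2+q^2) (e2 : N2^2 = 4*p^2+q^2) (e3 : N3^2 = 5*p^2+2*q^2+6*s) :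
    N0 ≤ N1+N2+N3 := by
  have hr : (Real.sqrt 5)^2 = 5 := Real.sq_sqrt (by norm_num)
  have hrpos : 0 < Real.sqrt 5 := Real.sqrt_pos.mpr (by norm_num)
  set r := Real.sqrt 5 with hrdef
  clear_value r
  have hrlo : 2.23 < r := by nlinarith
  have hrhi : r < 2.24 := by nlinarith
  set c : ℝ := 721/800 - 2*r/5 with hcdef
  clear_value c
  have hc : 0 < c := by rw [hcdef]; linarith
  have hchi : c < 1/100 := by rw [hcdef]; linarith
  set X : ℝ := 5*p^2+q^2+3*s with hXdef
  clear_value X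
  have hXnn : 0 ≤ X := by
    rw [hXdef]; linarith [sq_nonneg (10*p-3*q), sq_nonneg q]
  have hYnn : 0 ≤ 10*p^2+q^2+6*s := by
    linarith [sq_nonneg (10*p-3*q), sq_nonneg q]
  have hpq1 : 0 ≤ (p*q-s)*(p*q+s) := mul_nonneg (by linarith) (by linarith)
  have hpq2 : 0 ≤ q^2*(s+p*q) := mul_nonneg (sq_nonneg q) (by linarith)
  have hb13 : r/5*X ≤ N1*N3 := by
    apply le_of_sq_le_sq'' _ _ (mul_nonneg h1 h3)
    have hT : (r/5*X)^2 = X^2/5 := by linear_combination (X^2/25) * hr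
    have hmul : (N1*N3)^2 = N1^2*N3^2 := by ring
    rw [hT, hmul, e1, e3, hXdef]
    linarith [hpq1, hpq2, mul_nonneg (sq_nonneg q) (sq_nonneg (4*p-3*q))]
  have hb23 : r/5*(10*p^2+q^2+6*s) ≤ N2*N3 := by
    apply le_of_sq_le_sq'' _ _ (mul_nonneg h2 h3)
    have hT : (r/5*(10*p^2+q^2+6*s))^2 = (10*p^2+q^2+6*s)^2/5 := by
      linear_combination ((10*p^2+q^2+6*s)^2/25) * hr
    have hmul : (N2*N3)^2 = N2^2*N3^2 := by ring
    rw [hT, hmul, e2, e3]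
    linarith [hpq1, hpq2, mul_nonneg (sq_nonneg q) (sq_nonneg (p-q))]
  have hb12 : 2*p^2+q^2 ≤ N1*N2 := by
    apply le_of_sq_le_sq'' _ _ (mul_nonneg h1 h2)
    have hmul : (N1*N2)^2 = N1^2*N2^2 := by ring
    rw [hmul, e1, e2]
    linarith [sq_nonneg (p*q)]
  have key : N0^2 ≤ (N1+N2+N3)^2 := by
    have expand : (N1+N2+N3)^2
        = N1^2+N2^2+N3^2+2*(N1*N2)+2*(N1*N3)+2*(N2*N3) := by ring
    rcases le_total q (2*p) with hcase | hcase
    · -- q ≤ 2p : improved 12 bound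
      have hb12' : 2*p^2+q^2 + c*q^2 ≤ N1*N2 := by
        have step : 2*p^2+q^2+c*q^2 ≤ 2*p^2+(101/100)*q^2 := by
          have := mul_nonneg (by linarith : (0:ℝ) ≤ 1/100 - c) (sq_nonneg q)
          linarith
        refine le_trans step ?_
        apply le_of_sq_le_sq'' _ _ (mul_nonneg h1 h2)
        have hmul : (N1*N2)^2 = N1^2*N2^2 := by ring
        rw [hmul, e1, e2]
        linarith [mul_nonneg (mul_nonneg hp hq) (mul_nonneg hp hq),
          mul_nonneg (sq_nonneg q)
            (mul_nonneg (by linarith : (0:ℝ) ≤ 2*p-q) (by linarith : (0:ℝ) ≤ 2*p+q))]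
      rw [expand, e0, e1, e2, e3]
      rw [hcdef] at hb12'
      rw [hXdef] at hb13
      linarith [hb12', hb13, hb23]
    · -- q ≥ 2p : improved 13 bound
      have hb13' : r/5*X + c*q^2 ≤ N1*N3 := by
        apply le_of_sq_le_sq'' _ _ (mul_nonneg h1 h3)
        have hT : (r/5*X + c*q^2)^2 = X^2/5 + (2/5)*(r*c)*(X*q^2) + c^2*q^4 := by
          linear_combination (X^2/25) * hr
        have hmul : (N1*N3)^2 = N1^2*N3^2 := by ring
        rw [hT, hmul, e1, e3]
        have hrc : r*c ≤ 224/10000 := by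
          have h1' := mul_nonneg (by linarith : (0:ℝ) ≤ 2.24 - r) hc.le
          have h2' : (0:ℝ) ≤ (1/100 - c) * 2.24 := by
            apply mul_nonneg (by linarith) (by norm_num)
          linarith
        have hXq2 : 0 ≤ X*q^2 := mul_nonneg hXnn (sq_nonneg q)
        have hF3 : (2/5)*(r*c)*(X*q^2) ≤ (896/100000)*(X*q^2) := by
          have := mul_nonneg (by linarith : (0:ℝ) ≤ 224/10000 - r*c) hXq2
          linarith
        have hF4 : c^2*q^4 ≤ (1/10000)*q^4 := by
          have hcc : c^2 ≤ 1/10000 := by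
            have := mul_nonneg hc.le (by linarith : (0:ℝ) ≤ 1/100 - c)
            linarith
          have := mul_nonneg (by linarith : (0:ℝ) ≤ 1/10000 - c^2) (by positivity : (0:ℝ) ≤ q^4)
          linarith
        have hXle : X ≤ (15/4)*q^2 := by
          rw [hXdef]
          have hA := mul_nonneg (by linarith : (0:ℝ) ≤ q/2 - p) (by linarith : (0:ℝ) ≤ q/2 + p)
          have hB := mul_nonneg hq (by linarith : (0:ℝ) ≤ q - 2*p)
          linarith
        have hXq : X*q^2 ≤ (15/4)*q^4 := by
          have := mul_nonneg (by linarith : (0:ℝ) ≤ (15/4)*q^2 - X) (sq_nonneg q)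
          linarith
        have hsq : 0 ≤ q^2*((q-2*p)*(q-p)) :=
          mul_nonneg (sq_nonneg q) (mul_nonneg (by linarith) (by linarith))
        rw [hXdef]
        rw [hXdef] at hF3 hXq
        linarith [hpq1, hpq2, hF3, hF4, hXq, hsq, sq_nonneg (q^2)]
      rw [expand, e0, e1, e2, e3]
      rw [hcdef] at hb13'
      rw [hXdef] at hb13'
      linarith [hb12, hb13', hb23]
  exact le_of_sq_le_sq'' _ _ (by positivity) key

/- ## coordinate helpers -/

lemma clm_coord (M : Matrix (Fin 2) (Fin 2) ℂ) (x : E) (i : Fin 2) :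
    Matrix.toEuclideanCLM (𝕜 := ℂ) M x i = M.mulVec x i :=
  congrFun (Matrix.ofLp_toEuclideanCLM M x) i

lemma inner_E (v w : E) : (inner ℂ v w : ℂ) = conj (v 0) * w 0 + conj (v 1) * w 1 := by
  simp [PiLp.inner_apply, Fin.sum_univ_two, RCLike.inner_apply, mul_comm]

lemma normsq_E (v : E) : ‖v‖^2 = ‖v 0‖^2 + ‖v 1‖^2 := by
  rw [EuclideanSpace.norm_eq, Real.sq_sqrt (by positivity)]
  simp [Fin.sum_univ_two]

lemma opA_coord0 (x : E) : opA x 0 = 2 * x 0 := by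
  rw [opA, clm_coord]
  simp [Matrix.mulVec, dotProduct, Fin.sum_univ_two, Matrix.vecHead, Matrix.vecTail]

lemma opA_coord1 (x : E) : opA x 1 = x 1 := by
  rw [opA, clm_coord]
  simp [Matrix.mulVec, dotProduct, Fin.sum_univ_two, Matrix.vecHead, Matrix.vecTail]

lemma opC_coord0 (x : E) : opC x 0 = 2 * x 0 + x 1 := by
  rw [opC, clm_coord]
  simp [Matrix.mulVec, dotProduct, Fin.sum_univ_two, Matrix.vecHead, Matrix.vecTail]

lemma opC_coord1 (x : E) : opC x 1 = x 0 + x 1 := by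
  rw [opC, clm_coord]
  simp [Matrix.mulVec, dotProduct, Fin.sum_univ_two, Matrix.vecHead, Matrix.vecTail]

lemma opU_coord0 (x : E) :
    opU x 0 = ((3 + Real.sqrt 5 : ℝ) : ℂ) * x 0 + ((3 * Real.sqrt 5 / 5 : ℝ) : ℂ) * x 1 := by
  rw [opU, clm_coord]
  simp [Matrix.mulVec, dotProduct, Fin.sum_univ_two, Matrix.vecHead, Matrix.vecTail]

lemma opU_coord1 (x : E) : opU x 1 = ((49/20 : ℝ) : ℂ) * x 1 := by
  rw [opU, clm_coord]
  simp [Matrix.mulVec, dotProduct, Fin.sum_univ_two, Matrix.vecHead, Matrix.vecTail]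

/- ## Part 1 : the pointwise bound for opU -/

lemma opU_pointwise (x : E) : ‖opU x‖ ≤ ‖x‖ + ‖opA x‖ + ‖opC x‖ := by
  have hr : (Real.sqrt 5)^2 = 5 := Real.sq_sqrt (by norm_num)
  set ar := (x 0).re with har
  set ai := (x 0).im with hai
  set br := (x 1).re with hbr
  set bi := (x 1).im with hbi
  set p := ‖x 0‖ with hp
  set q := ‖x 1‖ with hq
  set s := (conj (x 0) * x 1).re with hs
  have hp2 : p^2 = ar^2 + ai^2 := by
    rw [hp, Complex.sq_norm, Complex.normSq_apply]; ring
  have hq2 : q^2 = br^2 + bi^2 := by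
    rw [hq, Complex.sq_norm, Complex.normSq_apply]; ring
  have hs2 : s = ar*br + ai*bi := by
    rw [hs]; simp [Complex.mul_re]; rfl
  have hcs : s^2 ≤ p^2*q^2 := by
    rw [hp2, hq2, hs2]
    nlinarith [sq_nonneg (ar*bi - ai*br)]
  have hpq : 0 ≤ p*q := mul_nonneg (norm_nonneg _) (norm_nonneg _)
  have hs1' : s ≤ p*q := by nlinarith
  have hs2' : -(p*q) ≤ s := by nlinarith
  have e1 : ‖x‖^2 = p^2 + q^2 := normsq_E x
  have e2 : ‖opA x‖^2 = 4*p^2 + q^2 := by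
    rw [normsq_E, opA_coord0, opA_coord1]
    have h2 : ‖2 * x 0‖ = 2 * p := by
      rw [norm_mul]; norm_num [hp]
    rw [h2]; ring
  have e3 : ‖opC x‖^2 = 5*p^2 + 2*q^2 + 6*s := by
    rw [normsq_E, opC_coord0, opC_coord1, Complex.sq_norm, Complex.sq_norm,
      Complex.normSq_apply, Complex.normSq_apply]
    simp only [Complex.add_re, Complex.add_im, Complex.mul_re, Complex.mul_im,
      Complex.re_ofNat, Complex.im_ofNat]
    rw [hp2, hq2, hs2]
    simp only [← har, ← hai, ← hbr, ← hbi]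
    ring
  have e0 : ‖opU x‖^2 = (14+6*Real.sqrt 5)*p^2 + (3121/400)*q^2 + (6+18*Real.sqrt 5/5)*s := by
    rw [normsq_E, opU_coord0, opU_coord1, Complex.sq_norm, Complex.sq_norm,
      Complex.normSq_apply, Complex.normSq_apply]
    simp only [Complex.add_re, Complex.add_im, Complex.mul_re, Complex.mul_im,
      Complex.ofReal_re, Complex.ofReal_im]
    rw [hp2, hq2, hs2]
    simp only [← har, ← hai, ← hbr, ← hbi]
    ring_nf
    nlinarith [hr]
  exact key_real p q s (norm_nonneg _) (norm_nonneg _) hs1' hs2'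
    _ _ _ _ (norm_nonneg _) (norm_nonneg _) (norm_nonneg _) e0 e1 e2 e3

/- ## Part 2 : helpers for the impossibility of the decomposition -/

lemma norm_le_inner_aux (v : E) (b : ℝ) (hb : 0 ≤ b)
    (h : ‖(inner ℂ v v : ℂ)‖ ≤ b * ‖v‖) : ‖v‖ ≤ b := by
  have h2 : (‖v‖:ℝ)^2 = RCLike.re (inner ℂ v v : ℂ) := (inner_self_eq_norm_sq v).symm
  have h3 : RCLike.re (inner ℂ v v : ℂ) ≤ ‖(inner ℂ v v : ℂ)‖ := RCLike.re_le_norm _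
  rcases (norm_nonneg v).eq_or_lt' with h0 | h0
  · rw [h0]; exact hb
  · nlinarith

lemma perturb_zero (d : ℂ) (κ : ℝ)
    (h : ∀ t : ℂ, 2*(t*d).re ≤ κ * ‖t‖^2) : d = 0 := by
  by_contra hd
  have hnd : 0 < Complex.normSq d := Complex.normSq_pos.mpr hd
  set ε : ℝ := 1/(|κ|+1) with hε
  have hεpos : 0 < ε := by positivity
  have h1 := h ((ε:ℂ) * conj d)
  have e1 : ((ε:ℂ) * conj d * d) = ((ε * Complex.normSq d : ℝ) : ℂ) := by
    rw [mul_assoc, mul_comm ((starRingEnd ℂ) d) d, Complex.mul_conj]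
    push_cast
    ring
  have e2 : ‖(ε:ℂ) * conj d‖ ^ 2 = ε^2 * Complex.normSq d := by
    rw [norm_mul, mul_pow, Complex.norm_conj, Complex.norm_real, Real.norm_eq_abs, abs_of_pos hεpos,
      Complex.sq_norm]
  rw [e1, e2, Complex.ofReal_re] at h1
  have h2 : 2 ≤ κ * ε := by
    have hεN : 0 < ε * Complex.normSq d := by positivity
    nlinarith
  have h3 : κ * ε ≤ |κ| * ε := by
    have := le_abs_self κ
    nlinarith
  have h4 : |κ| * ε < 1 := by
    rw [hε, mul_one_div, div_lt_one (by positivity)]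
    linarith
  linarith

def ee1 : E := EuclideanSpace.single 0 (1:ℂ)
def ee2 : E := EuclideanSpace.single 1 (1:ℂ)

@[simp] lemma ee1_0 : (ee1 : E) 0 = 1 := by simp [ee1]
@[simp] lemma ee1_1 : (ee1 : E) 1 = 0 := by simp [ee1]
@[simp] lemma ee2_0 : (ee2 : E) 0 = 0 := by simp [ee2]
@[simp] lemma ee2_1 : (ee2 : E) 1 = 1 := by simp [ee2]

lemma norm_ee1 : ‖(ee1 : E)‖ = 1 := by simp [ee1]
lemma norm_ee2 : ‖(ee2 : E)‖ = 1 := by simp [ee2]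

lemma norm_val (v : E) (t : ℝ) (ht : 0 ≤ t) (h : ‖v‖^2 = t^2) : ‖v‖ = t := by
  nlinarith [norm_nonneg v]

lemma norm_opA_ee1 : ‖opA ee1‖ = 2 := by
  apply norm_val _ _ (by norm_num)
  rw [normsq_E, opA_coord0, opA_coord1]
  norm_num

lemma norm_opA_ee2 : ‖opA ee2‖ = 1 := by
  apply norm_val _ _ (by norm_num)
  rw [normsq_E, opA_coord0, opA_coord1]
  simp

lemma norm_opC_ee1 : ‖opC ee1‖ = Real.sqrt 5 := by
  apply norm_val _ _ (Real.sqrt_nonneg 5)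
  rw [normsq_E, opC_coord0, opC_coord1, Real.sq_sqrt (by norm_num : (0:ℝ) ≤ 5)]
  norm_num

lemma normsq_opC_ee2 : ‖opC ee2‖^2 = 2 := by
  rw [normsq_E, opC_coord0, opC_coord1]
  norm_num

lemma no_decomposition :
    ¬ ∃ U₁ U₂ U₃ : E →L[ℂ] E,
        opU = U₁ + U₂ + U₃ ∧
        (∀ x y : E, ‖(inner ℂ (U₁ x) y : ℂ)‖ ≤ ‖x‖ * ‖y‖) ∧
        (∀ x y : E, ‖(inner ℂ (U₂ x) y : ℂ)‖ ≤ ‖opA x‖ * ‖y‖) ∧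
        (∀ x y : E, ‖(inner ℂ (U₃ x) y : ℂ)‖ ≤ ‖opC x‖ * ‖y‖) := by
  rintro ⟨U₁, U₂, U₃, hsum, h1, h2, h3⟩
  have hr : (Real.sqrt 5)^2 = 5 := Real.sq_sqrt (by norm_num)
  have hrnn : (0:ℝ) ≤ Real.sqrt 5 := Real.sqrt_nonneg 5
  have hrlo : 2.23 < Real.sqrt 5 := by nlinarith
  have hrhi : Real.sqrt 5 < 2.24 := by nlinarith
  -- pointwise norm bounds
  have hn1 : ∀ x : E, ‖U₁ x‖ ≤ ‖x‖ := fun x =>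
    norm_le_inner_aux _ _ (norm_nonneg x) (h1 x (U₁ x))
  have hn2 : ∀ x : E, ‖U₂ x‖ ≤ ‖opA x‖ := fun x =>
    norm_le_inner_aux _ _ (norm_nonneg _) (h2 x (U₂ x))
  have hn3 : ∀ x : E, ‖U₃ x‖ ≤ ‖opC x‖ := fun x =>
    norm_le_inner_aux _ _ (norm_nonneg _) (h3 x (U₃ x))
  have happ : ∀ x : E, opU x = U₁ x + U₂ x + U₃ x := by
    intro x; rw [hsum]; rfl
  -- step 1 : equality forcing at ee1
  have hb1 : ‖U₁ ee1‖ ≤ 1 := by have := hn1 ee1; rwa [norm_ee1] at this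
  have hb2 : ‖U₂ ee1‖ ≤ 2 := by have := hn2 ee1; rwa [norm_opA_ee1] at this
  have hb3 : ‖U₃ ee1‖ ≤ Real.sqrt 5 := by have := hn3 ee1; rwa [norm_opC_ee1] at this
  have hval1 : (inner ℂ ee1 (opU ee1) : ℂ) = ((3 + Real.sqrt 5 : ℝ) : ℂ) := by
    rw [inner_E, opU_coord0, opU_coord1]
    simp
  have hi : (inner ℂ ee1 (opU ee1) : ℂ)
      = (inner ℂ ee1 (U₁ ee1) : ℂ) + (inner ℂ ee1 (U₂ ee1) : ℂ) + (inner ℂ ee1 (U₃ ee1) : ℂ) := by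
    rw [happ ee1, inner_add_right, inner_add_right]
  have hsumre : ((inner ℂ ee1 (U₁ ee1) : ℂ)).re + ((inner ℂ ee1 (U₂ ee1) : ℂ)).re
      + ((inner ℂ ee1 (U₃ ee1) : ℂ)).re = 3 + Real.sqrt 5 := by
    have := congrArg Complex.re (hi.symm.trans hval1)
    simpa [Complex.add_re] using this
  have hr1le : ((inner ℂ ee1 (U₁ ee1) : ℂ)).re ≤ ‖U₁ ee1‖ := by
    have := re_inner_le_norm (𝕜 := ℂ) ee1 (U₁ ee1)
    rw [norm_ee1, one_mul] at this
    simpa [RCLike.re_to_complex] using this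
  have hr2le : ((inner ℂ ee1 (U₂ ee1) : ℂ)).re ≤ ‖U₂ ee1‖ := by
    have := re_inner_le_norm (𝕜 := ℂ) ee1 (U₂ ee1)
    rw [norm_ee1, one_mul] at this
    simpa [RCLike.re_to_complex] using this
  have hr3le : ((inner ℂ ee1 (U₃ ee1) : ℂ)).re ≤ ‖U₃ ee1‖ := by
    have := re_inner_le_norm (𝕜 := ℂ) ee1 (U₃ ee1)
    rw [norm_ee1, one_mul] at this
    simpa [RCLike.re_to_complex] using this
  have hr3 : ((inner ℂ ee1 (U₃ ee1) : ℂ)).re = Real.sqrt 5 := by linarith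
  -- step 2 : U₃ ee1 = √5 • ee1
  have hv3 : U₃ ee1 = ((Real.sqrt 5 : ℝ) : ℂ) • ee1 := by
    have hnsm : ‖(((Real.sqrt 5 : ℝ) : ℂ)) • (ee1 : E)‖^2 = 5 := by
      rw [norm_smul, Complex.norm_real, Real.norm_eq_abs, abs_of_nonneg hrnn, norm_ee1, mul_one, hr]
    have hinner : RCLike.re (inner ℂ (U₃ ee1) ((((Real.sqrt 5 : ℝ) : ℂ)) • ee1) : ℂ)
        = Real.sqrt 5 * Real.sqrt 5 := by
      rw [inner_smul_right, ← inner_conj_symm]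
      simp only [RCLike.re_to_complex, Complex.mul_re, Complex.ofReal_re, Complex.ofReal_im,
        Complex.conj_re, Complex.conj_im]
      rw [hr3]
      ring
    have hsqle : ‖U₃ ee1‖^2 ≤ 5 := by
      have := pow_le_pow_left₀ (norm_nonneg _) hb3 2
      rwa [hr] at this
    have hns : ‖U₃ ee1 - (((Real.sqrt 5 : ℝ) : ℂ)) • ee1‖^2 ≤ 0 := by
      rw [norm_sub_sq (𝕜 := ℂ), hinner, hnsm]
      nlinarith
    have h0 : ‖U₃ ee1 - (((Real.sqrt 5 : ℝ) : ℂ)) • ee1‖ = 0 := by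
      nlinarith [norm_nonneg (U₃ ee1 - (((Real.sqrt 5 : ℝ) : ℂ)) • ee1)]
    have := norm_eq_zero.mp h0
    exact sub_eq_zero.mp this
  -- step 3 : perturbation argument for c3
  set w3 : E := U₃ ee2 with hw3def
  set c3 : ℂ := (inner ℂ ee1 w3 : ℂ) with hc3def
  have hCC : (inner ℂ (opC ee1) (opC ee2) : ℂ) = 3 := by
    rw [inner_E, opC_coord0, opC_coord1, opC_coord0, opC_coord1]
    simp [Complex.ext_iff]
    norm_num
  have hC1sq : ‖opC ee1‖^2 = 5 := by rw [norm_opC_ee1, hr]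
  have hforall : ∀ t : ℂ, 2*(t*((Real.sqrt 5 : ℂ)*c3 - 3)).re ≤ 2 * ‖t‖^2 := by
    intro t
    have hb := hn3 (ee1 + t • ee2)
    have hsq := pow_le_pow_left₀ (norm_nonneg _) hb 2
    simp only [map_add, map_smul] at hsq
    rw [hv3] at hsq
    rw [norm_add_sq (𝕜 := ℂ), norm_add_sq (𝕜 := ℂ)] at hsq
    have hA : (inner ℂ ((((Real.sqrt 5 : ℝ) : ℂ)) • (ee1:E)) (t • w3) : ℂ)
        = (Real.sqrt 5 : ℂ) * (t * c3) := by
      rw [inner_smul_left, inner_smul_right, Complex.conj_ofReal, hc3def]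
    have hB : (inner ℂ (opC ee1) (t • opC ee2) : ℂ) = t * 3 := by
      rw [inner_smul_right, hCC]
    have hnsm : ‖(((Real.sqrt 5 : ℝ) : ℂ)) • (ee1 : E)‖^2 = 5 := by
      rw [norm_smul, Complex.norm_real, Real.norm_eq_abs, abs_of_nonneg hrnn, norm_ee1, mul_one, hr]
    have hnt1 : ‖t • w3‖^2 = ‖t‖^2 * ‖w3‖^2 := by
      rw [norm_smul]; ring
    have hnt2 : ‖t • opC ee2‖^2 = ‖t‖^2 * 2 := by
      rw [norm_smul, mul_pow, normsq_opC_ee2]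
    rw [hA, hB, hnsm, hnt1, hnt2, hC1sq] at hsq
    simp only [RCLike.re_to_complex] at hsq
    have hre : (t*((Real.sqrt 5 : ℂ)*c3-3)).re
        = ((Real.sqrt 5 : ℂ)*(t*c3)).re - (t*3).re := by
      rw [show t*((Real.sqrt 5 : ℂ)*c3-3) = (Real.sqrt 5 : ℂ)*(t*c3) - t*3 by ring,
        Complex.sub_re]
    rw [hre]
    nlinarith [mul_nonneg (sq_nonneg (‖t‖)) (sq_nonneg ‖w3‖)]
  have hc3eq : (Real.sqrt 5 : ℂ) * c3 = 3 := by
    have := perturb_zero _ 2 hforall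
    exact sub_eq_zero.mp this
  have habsc3 : Real.sqrt 5 * ‖c3‖ = 3 := by
    have := congrArg (‖·‖) hc3eq
    rwa [norm_mul, Complex.norm_real, Real.norm_eq_abs, abs_of_nonneg hrnn,
      show ‖(3:ℂ)‖ = 3 by norm_num] at this
  have hc3sq : ‖c3‖^2 = 9/5 := by nlinarith
  -- step 4 : Parseval bound on the second coordinate of w3
  have hc3coord : c3 = w3 0 := by rw [hc3def, inner_E]; simp
  have hw3sq : ‖w3‖^2 ≤ 2 := by
    have := pow_le_pow_left₀ (norm_nonneg _) (hn3 ee2) 2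
    rwa [normsq_opC_ee2] at this
  have h31 : ‖w3 1‖^2 ≤ 1/5 := by
    have hP := normsq_E w3
    rw [← hc3coord] at hP
    linarith [hP ▸ hw3sq, hc3sq]
  -- step 5 : the contradiction at ee2
  have hsplit : (opU ee2) 1 = (U₁ ee2) 1 + (U₂ ee2) 1 + (U₃ ee2) 1 := by
    rw [happ ee2]; rfl
  have hvalU : (opU ee2) 1 = ((49/20 : ℝ) : ℂ) := by
    rw [opU_coord1]; simp
  have habs1 : ‖(U₁ ee2) 1‖ ≤ 1 := by
    apply le_of_sq_le_sq'' _ _ (by norm_num)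
    have hP := normsq_E (U₁ ee2)
    have hle : ‖U₁ ee2‖ ≤ 1 := by have := hn1 ee2; rwa [norm_ee2] at this
    have := pow_le_pow_left₀ (norm_nonneg _) hle 2
    nlinarith [norm_nonneg ((U₁ ee2) 0), sq_nonneg (‖(U₁ ee2) 0‖)]
  have habs2 : ‖(U₂ ee2) 1‖ ≤ 1 := by
    apply le_of_sq_le_sq'' _ _ (by norm_num)
    have hP := normsq_E (U₂ ee2)
    have hle : ‖U₂ ee2‖ ≤ 1 := by have := hn2 ee2; rwa [norm_opA_ee2] at this
    have := pow_le_pow_left₀ (norm_nonneg _) hle 2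
    nlinarith [sq_nonneg (‖(U₂ ee2) 0‖)]
  have habs3 : ‖(U₃ ee2) 1‖ ≤ 449/1000 := by
    apply le_of_sq_le_sq'' _ _ (by norm_num)
    have : (U₃ ee2) 1 = w3 1 := by rw [hw3def]
    rw [this]
    nlinarith
  have htri : ‖(opU ee2) 1‖
      ≤ ‖(U₁ ee2) 1‖ + ‖(U₂ ee2) 1‖ + ‖(U₃ ee2) 1‖ := by
    rw [hsplit]
    calc ‖(U₁ ee2) 1 + (U₂ ee2) 1 + (U₃ ee2) 1‖
        ≤ ‖(U₁ ee2) 1 + (U₂ ee2) 1‖ + ‖(U₃ ee2) 1‖ :=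
          norm_add_le _ _
      _ ≤ ‖(U₁ ee2) 1‖ + ‖(U₂ ee2) 1‖ + ‖(U₃ ee2) 1‖ := by
          linarith [norm_add_le ((U₁ ee2) 1) ((U₂ ee2) 1)]
  rw [hvalU] at htri
  rw [Complex.norm_real, Real.norm_eq_abs] at htri
  have : |((49:ℝ)/20)| = 49/20 := by norm_num
  rw [this] at htri
  linarith

end

end CounterexampleThreeTerms

/-- **Counterexample to decomposition into three terms**: for `A = [[2,0],[0,1]]` and
`C = [[2,1],[1,1]]` on `ℂ²` there is a bounded operator `U` with
`|⟨Ux,y⟩| ≤ ‖x‖‖y‖ + ‖Ax‖‖y‖ + ‖Cx‖‖y‖` for all `x, y`, which admits no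
decomposition `U = U₁ + U₂ + U₃` with `|⟨U₁x,y⟩| ≤ ‖x‖‖y‖`,
`|⟨U₂x,y⟩| ≤ ‖Ax‖‖y‖` and `|⟨U₃x,y⟩| ≤ ‖Cx‖‖y‖`. -/
theorem exists_counterexample_three_terms :
    ∃ U : EuclideanSpace ℂ (Fin 2) →L[ℂ] EuclideanSpace ℂ (Fin 2),
      (∀ x y : EuclideanSpace ℂ (Fin 2),
        ‖(inner ℂ (U x) y : ℂ)‖ ≤ ‖x‖ * ‖y‖ + ‖opA x‖ * ‖y‖ + ‖opC x‖ * ‖y‖) ∧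
      ¬ ∃ U₁ U₂ U₃ : EuclideanSpace ℂ (Fin 2) →L[ℂ] EuclideanSpace ℂ (Fin 2),
          U = U₁ + U₂ + U₃ ∧
          (∀ x y : EuclideanSpace ℂ (Fin 2), ‖(inner ℂ (U₁ x) y : ℂ)‖ ≤ ‖x‖ * ‖y‖) ∧
          (∀ x y : EuclideanSpace ℂ (Fin 2), ‖(inner ℂ (U₂ x) y : ℂ)‖ ≤ ‖opA x‖ * ‖y‖) ∧
          (∀ x y : EuclideanSpace ℂ (Fin 2), ‖(inner ℂ (U₃ x) y : ℂ)‖ ≤ ‖opC x‖ * ‖y‖) := by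
  refine ⟨CounterexampleThreeTerms.opU, ?_, CounterexampleThreeTerms.no_decomposition⟩
  intro x y
  calc ‖(inner ℂ (CounterexampleThreeTerms.opU x) y : ℂ)‖
      ≤ ‖CounterexampleThreeTerms.opU x‖ * ‖y‖ := norm_inner_le_norm _ _
    _ ≤ (‖x‖ + ‖opA x‖ + ‖opC x‖) * ‖y‖ :=
        mul_le_mul_of_nonneg_right (CounterexampleThreeTerms.opU_pointwise x) (norm_nonneg y)
    _ = ‖x‖ * ‖y‖ + ‖opA x‖ * ‖y‖ + ‖opC x‖ * ‖y‖ := by ring
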